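/- Let G be a strongly connected directed co-graph, U ⊆ V(G), and R ⊆ U a set that resolves U in G. Suppose u1 ∈ U \ R is a 1-vertex w.r.t. R and u2 ∈ U \ R is a 2-vertex w.r.t. R. Then there is no vertex v ∈ U \ (R ∪ {u1, u2}) such that simultaneously (v,u1) ∉ E(G) and (v,u2) ∈ E(G), i.e., no third vertex v whose addition to R makes u1 fail to be a 1-vertex and u2 fail to be a 2-vertex w.r.t. R ∪ {v}. -/

import Mathlib

universe u

/-- There is a directed walk of length `n` from `u` to `v` in the digraph
with edge relation `E`. -/
def HasWalkLen {V : Type u} (E : V → V → Prop) (u v : V) (n : ℕ) : Prop :=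
  ∃ f : Fin (n + 1) → V, f 0 = u ∧ f (Fin.last n) = v ∧
    ∀ i : Fin n, E (f i.castSucc) (f i.succ)

/-- `v` is reachable from `u` by a directed walk. -/
def Reaches {V : Type u} (E : V → V → Prop) (u v : V) : Prop :=
  ∃ n, HasWalkLen E u v n

/-- Directed distance from `u` to `v` (length of a shortest directed path);
a junk value (`sInf ∅ = 0`) if `v` is unreachable from `u`. -/
noncomputable def ddist {V : Type u} (E : V → V → Prop) (u v : V) : ℕ :=
  sInf {n | HasWalkLen E u v n}

/-- `w` resolves the vertices `u` and `v`: `w = u`, or `w = v`, or both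
distances from `w` are defined (reachable) and different. -/
def Resolves {V : Type u} (E : V → V → Prop) (w u v : V) : Prop :=
  w = u ∨ w = v ∨
    (Reaches E w u ∧ Reaches E w v ∧ ddist E w u ≠ ddist E w v)

/-- `R` resolves the vertex set `U`: every pair of distinct vertices of `U`
is resolved by some member of `R`. -/
def ResolvesSet {V : Type u} (E : V → V → Prop) (R U : Set V) : Prop :=
  ∀ u ∈ U, ∀ v ∈ U, u ≠ v → ∃ w ∈ R, Resolves E w u v

/-- The digraph is strongly connected on the vertex set `S`. -/
def SConn {V : Type u} (E : V → V → Prop) (S : Set V) : Prop :=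
  ∀ u ∈ S, ∀ v ∈ S, Reaches E u v

/-- `u` is a 1-vertex w.r.t. `R`: `u ∉ R` and every `w ∈ R` has an edge to `u`. -/
def OneVertex {V : Type u} (E : V → V → Prop) (R : Set V) (u : V) : Prop :=
  u ∉ R ∧ ∀ w ∈ R, E w u

/-- `u` is a 2-vertex w.r.t. `R`: `u ∉ R` and no `w ∈ R` has an edge to `u`. -/
def TwoVertex {V : Type u} (E : V → V → Prop) (R : Set V) (u : V) : Prop :=
  u ∉ R ∧ ∀ w ∈ R, ¬ E w u

/-- Directed co-graphs with vertex set `S` and edge relation `E`, built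
inductively from single vertices by disjoint union, join and directed join. -/
inductive IsDicograph {V : Type u} : Set V → (V → V → Prop) → Prop
  | single (v : V) : IsDicograph {v} fun _ _ => False
  | disjUnion {S₁ S₂ : Set V} {E₁ E₂ : V → V → Prop} :
      IsDicograph S₁ E₁ → IsDicograph S₂ E₂ → Disjoint S₁ S₂ →
      IsDicograph (S₁ ∪ S₂) fun u v => E₁ u v ∨ E₂ u v
  | join {S₁ S₂ : Set V} {E₁ E₂ : V → V → Prop} :
      IsDicograph S₁ E₁ → IsDicograph S₂ E₂ → Disjoint S₁ S₂ →
      IsDicograph (S₁ ∪ S₂) fun u v =>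
        E₁ u v ∨ E₂ u v ∨ (u ∈ S₁ ∧ v ∈ S₂) ∨ (u ∈ S₂ ∧ v ∈ S₁)
  | dirJoin {S₁ S₂ : Set V} {E₁ E₂ : V → V → Prop} :
      IsDicograph S₁ E₁ → IsDicograph S₂ E₂ → Disjoint S₁ S₂ →
      IsDicograph (S₁ ∪ S₂) fun u v => E₁ u v ∨ E₂ u v ∨ (u ∈ S₁ ∧ v ∈ S₂)


section Aux

inductive W {V : Type u} (E : V → V → Prop) : V → V → ℕ → Prop
  | nil (v : V) : W E v v 0
  | cons {u x v : V} {n : ℕ} : E u x → W E x v n → W E u v (n + 1)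

lemma hasWalkLen_to_W {V : Type u} {E : V → V → Prop} :
    ∀ {n : ℕ} {u v : V}, HasWalkLen E u v n → W E u v n := by
  intro n
  induction n with
  | zero =>
    rintro u v ⟨f, h0, hl, _⟩
    have : u = v := by rw [← h0, ← hl]; rfl
    subst this; exact W.nil u
  | succ n ih =>
    rintro u v ⟨f, h0, hl, he⟩
    have e0 : E u (f 1) := by
      have := he 0
      simpa [h0] using this
    refine W.cons e0 (ih ⟨fun i => f i.succ, rfl, ?_, ?_⟩)
    · rw [← hl]; congr 1
    · intro i
      have := he i.succ
      simpa only [Fin.succ_castSucc] using this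

lemma W_to_hasWalkLen {V : Type u} {E : V → V → Prop} {n : ℕ} {u v : V}
    (h : W E u v n) : HasWalkLen E u v n := by
  induction h with
  | nil w => exact ⟨fun _ => w, rfl, rfl, fun i => i.elim0⟩
  | cons e hw ih =>
    obtain ⟨f, h0, hl, he⟩ := ih
    refine ⟨Fin.cons _ f, Fin.cons_zero _ _, ?_, ?_⟩
    · rw [← Fin.succ_last, Fin.cons_succ]; exact hl
    · intro i
      induction i using Fin.cases with
      | zero => simpa [h0] using e
      | succ j =>
        have := he j
        simpa [← Fin.succ_castSucc] using this

lemma hasWalkLen_one {V : Type u} {E : V → V → Prop} {u v : V}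
    (h : HasWalkLen E u v 1) : E u v := by
  rcases hasWalkLen_to_W h with _ | ⟨e, hw⟩
  cases hw; exact e

lemma edge_mem {V : Type u} {S : Set V} {E : V → V → Prop}
    (h : IsDicograph S E) : ∀ a b, E a b → a ∈ S ∧ b ∈ S := by
  induction h with
  | single v => exact fun a b hab => hab.elim
  | disjUnion h₁ h₂ hd ih₁ ih₂ =>
    rintro a b (h | h)
    · exact ⟨Or.inl (ih₁ _ _ h).1, Or.inl (ih₁ _ _ h).2⟩
    · exact ⟨Or.inr (ih₂ _ _ h).1, Or.inr (ih₂ _ _ h).2⟩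
  | join h₁ h₂ hd ih₁ ih₂ =>
    rintro a b (h | h | ⟨ha, hb⟩ | ⟨ha, hb⟩)
    · exact ⟨Or.inl (ih₁ _ _ h).1, Or.inl (ih₁ _ _ h).2⟩
    · exact ⟨Or.inr (ih₂ _ _ h).1, Or.inr (ih₂ _ _ h).2⟩
    · exact ⟨Or.inl ha, Or.inr hb⟩
    · exact ⟨Or.inr ha, Or.inl hb⟩
  | dirJoin h₁ h₂ hd ih₁ ih₂ =>
    rintro a b (h | h | ⟨ha, hb⟩)
    · exact ⟨Or.inl (ih₁ _ _ h).1, Or.inl (ih₁ _ _ h).2⟩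
    · exact ⟨Or.inr (ih₂ _ _ h).1, Or.inr (ih₂ _ _ h).2⟩
    · exact ⟨Or.inl ha, Or.inr hb⟩

section dj
variable {V : Type u} {S₁ S₂ : Set V} {E₁ E₂ : V → V → Prop}

/-- In a directed join, a walk starting in `S₂` stays in `S₂` and uses `E₂`. -/
lemma stay₂ (h₁ : IsDicograph S₁ E₁) (h₂ : IsDicograph S₂ E₂) (hd : Disjoint S₁ S₂) :
    ∀ {n : ℕ} {x v : V},
      W (fun a b => E₁ a b ∨ E₂ a b ∨ (a ∈ S₁ ∧ b ∈ S₂)) x v n → x ∈ S₂ →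
      W E₂ x v n ∧ v ∈ S₂ := by
  intro n x v hw
  induction hw with
  | nil w => exact fun hx => ⟨W.nil w, hx⟩
  | cons e hw ih =>
    intro hx
    rcases e with e | e | ⟨ha, _⟩
    · exact absurd hx (Set.disjoint_left.mp hd (edge_mem h₁ _ _ e).1)
    · have := ih (edge_mem h₂ _ _ e).2
      exact ⟨W.cons e this.1, this.2⟩
    · exact absurd hx (Set.disjoint_left.mp hd ha)

lemma stay₁ (h₁ : IsDicograph S₁ E₁) (h₂ : IsDicograph S₂ E₂) (hd : Disjoint S₁ S₂) :
    ∀ {n : ℕ} {x v : V},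
      W (fun a b => E₁ a b ∨ E₂ a b ∨ (a ∈ S₁ ∧ b ∈ S₂)) x v n → x ∈ S₁ → v ∈ S₁ →
      W E₁ x v n := by
  intro n x v hw
  induction hw with
  | nil w => exact fun _ _ => W.nil w
  | cons e hw ih =>
    intro hx hv
    rcases e with e | e | ⟨_, hb⟩
    · exact W.cons e (ih (edge_mem h₁ _ _ e).2 hv)
    · exact absurd hx (Set.disjoint_right.mp hd (edge_mem h₂ _ _ e).1)
    · exact absurd hv (Set.disjoint_right.mp hd (stay₂ h₁ h₂ hd hw hb).2)

/-- In a disjoint union, a walk of positive length lies in one component. -/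
lemma disj_split (h₁ : IsDicograph S₁ E₁) (h₂ : IsDicograph S₂ E₂) (hd : Disjoint S₁ S₂) :
    ∀ {n : ℕ} {u v : V}, W (fun a b => E₁ a b ∨ E₂ a b) u v (n + 1) →
      W E₁ u v (n + 1) ∨ W E₂ u v (n + 1) := by
  intro n
  induction n with
  | zero =>
    rintro u v (_ | ⟨e, hw⟩)
    cases hw
    rcases e with e | e
    · exact Or.inl (W.cons e (W.nil _))
    · exact Or.inr (W.cons e (W.nil _))
  | succ m ih =>
    rintro u v (_ | ⟨e, hw⟩)
    rcases ih hw with hw' | hw'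
    · rcases e with e | e
      · exact Or.inl (W.cons e hw')
      · -- e : E₂ u x, hw' : W E₁ x v; x ∈ S₁ ∩ S₂ contradiction
        rcases hw' with _ | ⟨e', _⟩
        exact absurd (edge_mem h₁ _ _ e').1
          (Set.disjoint_right.mp hd (edge_mem h₂ _ _ e).2)
    · rcases e with e | e
      · rcases hw' with _ | ⟨e', _⟩
        exact absurd (edge_mem h₂ _ _ e').1
          (Set.disjoint_left.mp hd (edge_mem h₁ _ _ e).2)
      · exact Or.inr (W.cons e hw')
end dj

lemma W_mono {V : Type u} {E E' : V → V → Prop} (hE : ∀ a b, E a b → E' a b) :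
    ∀ {n : ℕ} {u v : V}, W E u v n → W E' u v n := by
  intro n u v hw
  induction hw with
  | nil w => exact W.nil w
  | cons e _ ih => exact W.cons (hE _ _ e) ih

lemma W_first_mem {V : Type u} {S : Set V} {E : V → V → Prop}
    (he : ∀ a b, E a b → a ∈ S ∧ b ∈ S) {n : ℕ} {u v : V} (hw : W E u v n) :
    u = v ∨ u ∈ S := by
  cases hw with
  | nil w => exact Or.inl rfl
  | cons e _ => exact Or.inr (he _ _ e).1

lemma W_last_mem {V : Type u} {S : Set V} {E : V → V → Prop}
    (he : ∀ a b, E a b → a ∈ S ∧ b ∈ S) {n : ℕ} {u v : V} (hw : W E u v n) :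
    u = v ∨ v ∈ S := by
  induction hw with
  | nil w => exact Or.inl rfl
  | cons e hw' ih =>
    rcases ih with rfl | h
    · exact Or.inr (he _ _ e).2
    · exact Or.inr h

/-- In a dicograph, any pair joined by a walk is joined by a walk of length ≤ 2. -/
lemma short {V : Type u} {S : Set V} {E : V → V → Prop} (h : IsDicograph S E) :
    ∀ {n : ℕ} {u v : V}, W E u v n → u ≠ v → E u v ∨ ∃ x, E u x ∧ E x v := by
  induction h with
  | single w =>
    rintro n u v (_ | ⟨e, _⟩) hne
    · exact absurd rfl hne
    · exact e.elim
  | disjUnion h₁ h₂ hd ih₁ ih₂ =>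
    intro n u v hw hne
    match n, hw with
    | 0, hw => cases hw; exact absurd rfl hne
    | (m+1), hw =>
      rcases disj_split h₁ h₂ hd hw with hw' | hw'
      · rcases ih₁ hw' hne with e | ⟨x, e1, e2⟩
        · exact Or.inl (Or.inl e)
        · exact Or.inr ⟨x, Or.inl e1, Or.inl e2⟩
      · rcases ih₂ hw' hne with e | ⟨x, e1, e2⟩
        · exact Or.inl (Or.inr e)
        · exact Or.inr ⟨x, Or.inr e1, Or.inr e2⟩
  | @join S₁ S₂ E₁ E₂ h₁ h₂ hd ih₁ ih₂ =>
    intro n u v hw hne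
    have hG' := IsDicograph.join h₁ h₂ hd
    have hu := (W_first_mem (edge_mem hG') hw).resolve_left hne
    have hv := (W_last_mem (edge_mem hG') hw).resolve_left hne
    rcases hu with hu | hu <;> rcases hv with hv | hv
    · -- both in S₁
      rcases Set.eq_empty_or_nonempty S₂ with h2e | ⟨x, hx⟩
      · have hmono : ∀ a b, (E₁ a b ∨ E₂ a b ∨ (a ∈ S₁ ∧ b ∈ S₂) ∨ (a ∈ S₂ ∧ b ∈ S₁)) → E₁ a b := by
          rintro a b (e | e | ⟨_, hb⟩ | ⟨ha, _⟩)
          · exact e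
          · exact absurd ((edge_mem h₂ _ _ e).1) (by simp [h2e])
          · exact absurd hb (by simp [h2e])
          · exact absurd ha (by simp [h2e])
        rcases ih₁ (W_mono hmono hw) hne with e | ⟨x, e1, e2⟩
        · exact Or.inl (Or.inl e)
        · exact Or.inr ⟨x, Or.inl e1, Or.inl e2⟩
      · exact Or.inr ⟨x, Or.inr (Or.inr (Or.inl ⟨hu, hx⟩)),
          Or.inr (Or.inr (Or.inr ⟨hx, hv⟩))⟩
    · exact Or.inl (Or.inr (Or.inr (Or.inl ⟨hu, hv⟩)))
    · exact Or.inl (Or.inr (Or.inr (Or.inr ⟨hu, hv⟩)))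
    · -- both in S₂
      rcases Set.eq_empty_or_nonempty S₁ with h1e | ⟨x, hx⟩
      · have hmono : ∀ a b, (E₁ a b ∨ E₂ a b ∨ (a ∈ S₁ ∧ b ∈ S₂) ∨ (a ∈ S₂ ∧ b ∈ S₁)) → E₂ a b := by
          rintro a b (e | e | ⟨ha, _⟩ | ⟨_, hb⟩)
          · exact absurd ((edge_mem h₁ _ _ e).1) (by simp [h1e])
          · exact e
          · exact absurd ha (by simp [h1e])
          · exact absurd hb (by simp [h1e])
        rcases ih₂ (W_mono hmono hw) hne with e | ⟨x, e1, e2⟩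
        · exact Or.inl (Or.inr (Or.inl e))
        · exact Or.inr ⟨x, Or.inr (Or.inl e1), Or.inr (Or.inl e2)⟩
      · exact Or.inr ⟨x, Or.inr (Or.inr (Or.inr ⟨hu, hx⟩)),
          Or.inr (Or.inr (Or.inl ⟨hx, hv⟩))⟩
  | @dirJoin S₁ S₂ E₁ E₂ h₁ h₂ hd ih₁ ih₂ =>
    intro n u v hw hne
    have hG' := IsDicograph.dirJoin h₁ h₂ hd
    have hu := (W_first_mem (edge_mem hG') hw).resolve_left hne
    have hv := (W_last_mem (edge_mem hG') hw).resolve_left hne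
    rcases hu with hu | hu
    · rcases hv with hv | hv
      · rcases ih₁ (stay₁ h₁ h₂ hd hw hu hv) hne with e | ⟨x, e1, e2⟩
        · exact Or.inl (Or.inl e)
        · exact Or.inr ⟨x, Or.inl e1, Or.inl e2⟩
      · exact Or.inl (Or.inr (Or.inr ⟨hu, hv⟩))
    · rcases ih₂ (stay₂ h₁ h₂ hd hw hu).1 hne with e | ⟨x, e1, e2⟩
      · exact Or.inl (Or.inr (Or.inl e))
      · exact Or.inr ⟨x, Or.inr (Or.inl e1), Or.inr (Or.inl e2)⟩

/-- The forbidden five-vertex configuration cannot occur in a dicograph. -/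
lemma no_config {V : Type u} {S : Set V} {E : V → V → Prop} (h : IsDicograph S E) :
    ∀ w₁ w₂ u₁ u₂ v : V, E w₁ u₁ → E w₂ u₁ → E w₂ v → E v u₂ →
      ¬ E w₁ u₂ → ¬ E w₂ u₂ → ¬ E w₁ v → ¬ E v u₁ → False := by
  induction h with
  | single w => exact fun _ _ _ _ _ e _ _ _ _ _ _ _ => e
  | @disjUnion S₁ S₂ E₁ E₂ h₁ h₂ hd ih₁ ih₂ =>
    intro w₁ w₂ u₁ u₂ v e11 e21 e2v ev2 n12 n22 n1v nv1
    have hnd : ∀ x : V, x ∈ S₁ → x ∈ S₂ → False := fun x h1 h2 =>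
      Set.disjoint_left.mp hd h1 h2
    rcases ev2 with e | e
    · -- v, u₂ ∈ S₁
      have hv := (edge_mem h₁ _ _ e).1
      have hu2 := (edge_mem h₁ _ _ e).2
      have e2v' : E₁ w₂ v := e2v.resolve_right fun e' => hnd v hv (edge_mem h₂ _ _ e').2
      have hw2 := (edge_mem h₁ _ _ e2v').1
      have e21' : E₁ w₂ u₁ := e21.resolve_right fun e' => hnd w₂ hw2 (edge_mem h₂ _ _ e').1
      have hu1 := (edge_mem h₁ _ _ e21').2
      have e11' : E₁ w₁ u₁ := e11.resolve_right fun e' => hnd u₁ hu1 (edge_mem h₂ _ _ e').2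
      exact ih₁ w₁ w₂ u₁ u₂ v e11' e21' e2v' e
        (fun e' => n12 (Or.inl e')) (fun e' => n22 (Or.inl e'))
        (fun e' => n1v (Or.inl e')) (fun e' => nv1 (Or.inl e'))
    · -- v, u₂ ∈ S₂
      have hv := (edge_mem h₂ _ _ e).1
      have hu2 := (edge_mem h₂ _ _ e).2
      have e2v' : E₂ w₂ v := e2v.resolve_left fun e' => hnd v (edge_mem h₁ _ _ e').2 hv
      have hw2 := (edge_mem h₂ _ _ e2v').1
      have e21' : E₂ w₂ u₁ := e21.resolve_left fun e' => hnd w₂ (edge_mem h₁ _ _ e').1 hw2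
      have hu1 := (edge_mem h₂ _ _ e21').2
      have e11' : E₂ w₁ u₁ := e11.resolve_left fun e' => hnd u₁ (edge_mem h₁ _ _ e').2 hu1
      exact ih₂ w₁ w₂ u₁ u₂ v e11' e21' e2v' e
        (fun e' => n12 (Or.inr e')) (fun e' => n22 (Or.inr e'))
        (fun e' => n1v (Or.inr e')) (fun e' => nv1 (Or.inr e'))
  | @join S₁ S₂ E₁ E₂ h₁ h₂ hd ih₁ ih₂ =>
    intro w₁ w₂ u₁ u₂ v e11 e21 e2v ev2 n12 n22 n1v nv1
    have hG' := IsDicograph.join h₁ h₂ hd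
    have hnd : ∀ x : V, x ∈ S₁ → x ∈ S₂ → False := fun x h1 h2 =>
      Set.disjoint_left.mp hd h1 h2
    -- all five vertices lie in S₁ ∪ S₂
    have hw1 := (edge_mem hG' _ _ e11).1
    have hu1 := (edge_mem hG' _ _ e11).2
    have hw2 := (edge_mem hG' _ _ e21).1
    have hv := (edge_mem hG' _ _ ev2).1
    have hu2 := (edge_mem hG' _ _ ev2).2
    -- non-edges force same side
    have same : ∀ a b : V, a ∈ S₁ ∪ S₂ → b ∈ S₁ ∪ S₂ →
        ¬ (E₁ a b ∨ E₂ a b ∨ (a ∈ S₁ ∧ b ∈ S₂) ∨ (a ∈ S₂ ∧ b ∈ S₁)) →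
        (a ∈ S₁ ∧ b ∈ S₁) ∨ (a ∈ S₂ ∧ b ∈ S₂) := by
      rintro a b (ha | ha) (hb | hb) hn
      · exact Or.inl ⟨ha, hb⟩
      · exact absurd (Or.inr (Or.inr (Or.inl ⟨ha, hb⟩))) hn
      · exact absurd (Or.inr (Or.inr (Or.inr ⟨ha, hb⟩))) hn
      · exact Or.inr ⟨ha, hb⟩
    rcases same w₁ u₂ hw1 hu2 n12 with ⟨hw1', hu2'⟩ | ⟨hw1', hu2'⟩
    · -- w₁, u₂ ∈ S₁; propagate
      have hv' : v ∈ S₁ := by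
        rcases same w₁ v hw1 hv n1v with ⟨_, h⟩ | ⟨h, _⟩
        · exact h
        · exact absurd hw1' (fun hh => hnd w₁ hh h)
      have hu1' : u₁ ∈ S₁ := by
        rcases same v u₁ hv hu1 nv1 with ⟨_, h⟩ | ⟨h, _⟩
        · exact h
        · exact absurd hv' (fun hh => hnd v hh h)
      have hw2' : w₂ ∈ S₁ := by
        rcases same w₂ u₂ hw2 hu2 n22 with ⟨h, _⟩ | ⟨_, h⟩
        · exact h
        · exact absurd hu2' (fun hh => hnd u₂ hh h)
      -- edges reduce to E₁
      have red : ∀ a b : V, a ∈ S₁ → b ∈ S₁ →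
          (E₁ a b ∨ E₂ a b ∨ (a ∈ S₁ ∧ b ∈ S₂) ∨ (a ∈ S₂ ∧ b ∈ S₁)) → E₁ a b := by
        rintro a b ha hb (e | e | ⟨_, h⟩ | ⟨h, _⟩)
        · exact e
        · exact absurd ha (fun hh => hnd a hh (edge_mem h₂ _ _ e).1)
        · exact absurd hb (fun hh => hnd b hh h)
        · exact absurd ha (fun hh => hnd a hh h)
      exact ih₁ w₁ w₂ u₁ u₂ v (red _ _ hw1' hu1' e11) (red _ _ hw2' hu1' e21)
        (red _ _ hw2' hv' e2v) (red _ _ hv' hu2' ev2)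
        (fun e => n12 (Or.inl e)) (fun e => n22 (Or.inl e))
        (fun e => n1v (Or.inl e)) (fun e => nv1 (Or.inl e))
    · -- w₁, u₂ ∈ S₂
      have hv' : v ∈ S₂ := by
        rcases same w₁ v hw1 hv n1v with ⟨h, _⟩ | ⟨_, h⟩
        · exact absurd hw1' (hnd w₁ h)
        · exact h
      have hu1' : u₁ ∈ S₂ := by
        rcases same v u₁ hv hu1 nv1 with ⟨h, _⟩ | ⟨_, h⟩
        · exact absurd hv' (hnd v h)
        · exact h
      have hw2' : w₂ ∈ S₂ := by
        rcases same w₂ u₂ hw2 hu2 n22 with ⟨_, h⟩ | ⟨h, _⟩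
        · exact absurd hu2' (hnd u₂ h)
        · exact h
      have red : ∀ a b : V, a ∈ S₂ → b ∈ S₂ →
          (E₁ a b ∨ E₂ a b ∨ (a ∈ S₁ ∧ b ∈ S₂) ∨ (a ∈ S₂ ∧ b ∈ S₁)) → E₂ a b := by
        rintro a b ha hb (e | e | ⟨h, _⟩ | ⟨_, h⟩)
        · exact absurd (edge_mem h₁ _ _ e).1 (fun hh => hnd a hh ha)
        · exact e
        · exact absurd h (fun hh => hnd a hh ha)
        · exact absurd h (fun hh => hnd b hh hb)
      exact ih₂ w₁ w₂ u₁ u₂ v (red _ _ hw1' hu1' e11) (red _ _ hw2' hu1' e21)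
        (red _ _ hw2' hv' e2v) (red _ _ hv' hu2' ev2)
        (fun e => n12 (Or.inr (Or.inl e))) (fun e => n22 (Or.inr (Or.inl e)))
        (fun e => n1v (Or.inr (Or.inl e))) (fun e => nv1 (Or.inr (Or.inl e)))
  | @dirJoin S₁ S₂ E₁ E₂ h₁ h₂ hd ih₁ ih₂ =>
    intro w₁ w₂ u₁ u₂ v e11 e21 e2v ev2 n12 n22 n1v nv1
    have hG' := IsDicograph.dirJoin h₁ h₂ hd
    have hnd : ∀ x : V, x ∈ S₁ → x ∈ S₂ → False := fun x h1 h2 =>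
      Set.disjoint_left.mp hd h1 h2
    have hu2 := (edge_mem hG' _ _ ev2).2
    rcases hu2 with hu2 | hu2
    · -- u₂ ∈ S₁
      have ev2' : E₁ v u₂ := by
        rcases ev2 with e | e | ⟨_, h⟩
        · exact e
        · exact absurd hu2 (fun hh => hnd u₂ hh (edge_mem h₂ _ _ e).2)
        · exact absurd hu2 (fun hh => hnd u₂ hh h)
      have hv : v ∈ S₁ := (edge_mem h₁ _ _ ev2').1
      have e2v' : E₁ w₂ v := by
        rcases e2v with e | e | ⟨_, h⟩
        · exact e
        · exact absurd hv (fun hh => hnd v hh (edge_mem h₂ _ _ e).2)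
        · exact absurd hv (fun hh => hnd v hh h)
      have hw2 : w₂ ∈ S₁ := (edge_mem h₁ _ _ e2v').1
      have hu1 : u₁ ∈ S₁ := by
        rcases (edge_mem hG' _ _ e21).2 with h | h
        · exact h
        · exact absurd (Or.inr (Or.inr ⟨hv, h⟩)) nv1
      have e21' : E₁ w₂ u₁ := by
        rcases e21 with e | e | ⟨_, h⟩
        · exact e
        · exact absurd hu1 (fun hh => hnd u₁ hh (edge_mem h₂ _ _ e).2)
        · exact absurd hu1 (fun hh => hnd u₁ hh h)
      have e11' : E₁ w₁ u₁ := by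
        rcases e11 with e | e | ⟨_, h⟩
        · exact e
        · exact absurd hu1 (fun hh => hnd u₁ hh (edge_mem h₂ _ _ e).2)
        · exact absurd hu1 (fun hh => hnd u₁ hh h)
      exact ih₁ w₁ w₂ u₁ u₂ v e11' e21' e2v' ev2'
        (fun e => n12 (Or.inl e)) (fun e => n22 (Or.inl e))
        (fun e => n1v (Or.inl e)) (fun e => nv1 (Or.inl e))
    · -- u₂ ∈ S₂
      have hv : v ∈ S₂ := by
        rcases (edge_mem hG' _ _ ev2).1 with h | h
        · -- v ∈ S₁: show contradiction
          exfalso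
          have hu1 : u₁ ∈ S₁ := by
            rcases (edge_mem hG' _ _ e11).2 with hh | hh
            · exact hh
            · exact absurd (Or.inr (Or.inr ⟨h, hh⟩)) nv1
          have hw2 : w₂ ∈ S₁ := by
            rcases e21 with e | e | ⟨hh, hh'⟩
            · exact (edge_mem h₁ _ _ e).1
            · exact absurd hu1 (fun g => hnd u₁ g (edge_mem h₂ _ _ e).2)
            · exact absurd hu1 (fun g => hnd u₁ g hh')
          exact n22 (Or.inr (Or.inr ⟨hw2, hu2⟩))
        · exact h
      have ev2' : E₂ v u₂ := by
        rcases ev2 with e | e | ⟨h, _⟩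
        · exact absurd hv (fun hh => hnd v (edge_mem h₁ _ _ e).1 hh)
        · exact e
        · exact absurd hv (fun hh => hnd v h hh)
      have hw2 : w₂ ∈ S₂ := by
        rcases e2v with e | e | ⟨h, _⟩
        · exact absurd hv (fun hh => hnd v (edge_mem h₁ _ _ e).2 hh)
        · exact (edge_mem h₂ _ _ e).1
        · exact absurd (Or.inr (Or.inr ⟨h, hu2⟩)) n22
      have e2v' : E₂ w₂ v := by
        rcases e2v with e | e | ⟨h, _⟩
        · exact absurd hw2 (fun hh => hnd w₂ (edge_mem h₁ _ _ e).1 hh)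
        · exact e
        · exact absurd hw2 (fun hh => hnd w₂ h hh)
      have e21' : E₂ w₂ u₁ := by
        rcases e21 with e | e | ⟨h, _⟩
        · exact absurd hw2 (fun hh => hnd w₂ (edge_mem h₁ _ _ e).1 hh)
        · exact e
        · exact absurd hw2 (fun hh => hnd w₂ h hh)
      have hu1 : u₁ ∈ S₂ := (edge_mem h₂ _ _ e21').2
      have e11' : E₂ w₁ u₁ := by
        rcases e11 with e | e | ⟨h, h'⟩
        · exact absurd hu1 (fun hh => hnd u₁ (edge_mem h₁ _ _ e).2 hh)
        · exact e
        · exact absurd (Or.inr (Or.inr ⟨h, hu2⟩)) n12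
      exact ih₂ w₁ w₂ u₁ u₂ v e11' e21' e2v' ev2'
        (fun e => n12 (Or.inr (Or.inl e))) (fun e => n22 (Or.inr (Or.inl e)))
        (fun e => n1v (Or.inr (Or.inl e))) (fun e => nv1 (Or.inr (Or.inl e)))


lemma hasWalkLen_zero {V : Type u} {E : V → V → Prop} {a b : V}
    (h : HasWalkLen E a b 0) : a = b := by
  cases hasWalkLen_to_W h; rfl

lemma ddist_eq_one {V : Type u} {E : V → V → Prop} {a b : V}
    (hne : a ≠ b) (e : E a b) : ddist E a b = 1 := by
  have h1 : HasWalkLen E a b 1 := W_to_hasWalkLen (W.cons e (W.nil b))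
  have hle : sInf {n | HasWalkLen E a b n} ≤ 1 := Nat.sInf_le h1
  have h0 : sInf {n | HasWalkLen E a b n} ≠ 0 := by
    intro h
    have := h ▸ Nat.sInf_mem (⟨1, h1⟩ : Set.Nonempty {n | HasWalkLen E a b n})
    exact hne (hasWalkLen_zero this)
  unfold ddist
  omega

lemma ddist_eq_two {V : Type u} {E : V → V → Prop} {a b x : V}
    (hne : a ≠ b) (hnE : ¬ E a b) (e1 : E a x) (e2 : E x b) :
    ddist E a b = 2 := by
  have h2 : HasWalkLen E a b 2 := W_to_hasWalkLen (W.cons e1 (W.cons e2 (W.nil b)))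
  have hle : sInf {n | HasWalkLen E a b n} ≤ 2 := Nat.sInf_le h2
  have hne' : Set.Nonempty {n | HasWalkLen E a b n} := ⟨2, h2⟩
  have h0 : sInf {n | HasWalkLen E a b n} ≠ 0 := by
    intro h
    exact hne (hasWalkLen_zero (h ▸ Nat.sInf_mem hne'))
  have h1 : sInf {n | HasWalkLen E a b n} ≠ 1 := by
    intro h
    exact hnE (hasWalkLen_one (h ▸ Nat.sInf_mem hne'))
  unfold ddist
  omega

end Aux

/-- In a strongly connected directed co-graph, if `R` resolves `U` and `U` has
a 1-vertex `u₁` and a 2-vertex `u₂` w.r.t. `R`, then no further vertex `v` of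
`U` simultaneously destroys the 1-vertex and the 2-vertex, i.e. there is no
`v ∈ U \ (R ∪ {u₁, u₂})` with `(v,u₁) ∉ E(G)` and `(v,u₂) ∈ E(G)`. -/
theorem stmt_11 {V : Type u} {S U R : Set V} {E : V → V → Prop}
    (hG : IsDicograph S E) (hsc : SConn E S)
    (hU : U ⊆ S) (hRU : R ⊆ U)
    (hres : ResolvesSet E R U)
    {u₁ u₂ : V} (hu₁ : u₁ ∈ U) (hu₁R : u₁ ∉ R) (h1v : OneVertex E R u₁)
    (hu₂ : u₂ ∈ U) (hu₂R : u₂ ∉ R) (h2v : TwoVertex E R u₂) :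
    ¬ ∃ v ∈ U, v ∉ R ∧ v ≠ u₁ ∧ v ≠ u₂ ∧ ¬ E v u₁ ∧ E v u₂ := by
  rintro ⟨v, hvU, hvR, hvu₁, hvu₂, hnvu₁, hevu₂⟩
  -- a resolver for the pair (u₁, v)
  obtain ⟨w₁, hw₁R, hr₁⟩ := hres u₁ hu₁ v hvU (fun h => hvu₁ h.symm)
  rcases hr₁ with rfl | rfl | ⟨_, ⟨n₁, hwalk₁⟩, hdne₁⟩
  · exact hu₁R hw₁R
  · exact hvR hw₁R
  -- a resolver for the pair (u₂, v)
  obtain ⟨w₂, hw₂R, hr₂⟩ := hres u₂ hu₂ v hvU (fun h => hvu₂ h.symm)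
  rcases hr₂ with rfl | rfl | ⟨⟨n₂, hwalk₂⟩, ⟨n₂', hwalk₂'⟩, hdne₂⟩
  · exact hu₂R hw₂R
  · exact hvR hw₂R
  have hw₁u₁ : E w₁ u₁ := h1v.2 w₁ hw₁R
  have hw₂u₁ : E w₂ u₁ := h1v.2 w₂ hw₂R
  have hnw₁u₂ : ¬ E w₁ u₂ := h2v.2 w₁ hw₁R
  have hnw₂u₂ : ¬ E w₂ u₂ := h2v.2 w₂ hw₂R
  have hw₁ne_u₁ : w₁ ≠ u₁ := fun h => hu₁R (h ▸ hw₁R)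
  have hw₁ne_v : w₁ ≠ v := fun h => hvR (h ▸ hw₁R)
  have hw₂ne_u₂ : w₂ ≠ u₂ := fun h => hu₂R (h ▸ hw₂R)
  have hw₂ne_v : w₂ ≠ v := fun h => hvR (h ▸ hw₂R)
  -- d(w₁,u₁) = 1, hence ¬ E w₁ v
  have hd₁ : ddist E w₁ u₁ = 1 := ddist_eq_one hw₁ne_u₁ hw₁u₁
  have hnw₁v : ¬ E w₁ v := fun e => hdne₁ (by rw [hd₁, ddist_eq_one hw₁ne_v e])
  -- d(w₂,u₂) = 2
  have hd₂ : ddist E w₂ u₂ = 2 := by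
    rcases short hG (hasWalkLen_to_W hwalk₂) hw₂ne_u₂ with e | ⟨x, e1, e2⟩
    · exact absurd e hnw₂u₂
    · exact ddist_eq_two hw₂ne_u₂ hnw₂u₂ e1 e2
  -- hence E w₂ v
  have hw₂v : E w₂ v := by
    by_contra hne
    rcases short hG (hasWalkLen_to_W hwalk₂') hw₂ne_v with e | ⟨x, e1, e2⟩
    · exact hne e
    · exact hdne₂ (by rw [hd₂, ddist_eq_two hw₂ne_v hne e1 e2])
  exact no_config hG w₁ w₂ u₁ u₂ v hw₁u₁ hw₂u₁ hw₂v hevu₂ hnw₁u₂ hnw₂u₂ hnw₁v hnvu₁
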